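/- For a connected graph, if (C,C̄) is a consistent partition with λ = NCut(C,C̄) and γ ≥ gvol(V)·λ/4, then the set of minimizers of NCut over consistent partitions equals the set of minimizers of F̂_γ over all subsets of V, and the two optimal values are equal. -/
import Mathlib


open Finset

/-- cut(C, C̄) = 2 ∑_{i∈C, j∈C̄} w_{ij} -/
noncomputable def cutW {n : ℕ} (w : Fin n → Fin n → ℝ) (C : Finset (Fin n)) : ℝ :=
  2 * ∑ i ∈ C, ∑ j ∈ Cᶜ, w i j

/-- generalized volume gvol(C) = ∑_{i∈C} b_i -/
noncomputable def gvol {n : ℕ} (b : Fin n → ℝ) (C : Finset (Fin n)) : ℝ := ∑ i ∈ C, b i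

/-- bal(C) = 2 gvol(C) gvol(C̄) / gvol(V) -/
noncomputable def bal {n : ℕ} (b : Fin n → ℝ) (C : Finset (Fin n)) : ℝ :=
  2 * gvol b C * gvol b Cᶜ / gvol b Finset.univ

/-- NCut(C,C̄) = cut(C,C̄)/bal(C) -/
noncomputable def ncut {n : ℕ} (w : Fin n → Fin n → ℝ) (b : Fin n → ℝ) (C : Finset (Fin n)) : ℝ :=
  cutW w C / bal b C

/-- M̂(C) = 2 ∑_{i∈C, j∈C̄} q^m_{ij}, twice the number of violated must-links -/
noncomputable def Mhat {n : ℕ} (qm : Fin n → Fin n → ℝ) (C : Finset (Fin n)) : ℝ :=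
  2 * ∑ i ∈ C, ∑ j ∈ Cᶜ, qm i j

/-- N̂(C) = ∑_{i,j∈C} q^c_{ij} + ∑_{i,j∈C̄} q^c_{ij}, twice the number of violated cannot-links -/
noncomputable def Nhat {n : ℕ} (qc : Fin n → Fin n → ℝ) (C : Finset (Fin n)) : ℝ :=
  (∑ i ∈ C, ∑ j ∈ C, qc i j) + ∑ i ∈ Cᶜ, ∑ j ∈ Cᶜ, qc i j

/-- F̂_γ(C) = (cut(C,C̄) + γ(M̂(C)+N̂(C))) / bal(C) -/
noncomputable def Fhat {n : ℕ} (w : Fin n → Fin n → ℝ) (b : Fin n → ℝ)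
    (qm qc : Fin n → Fin n → ℝ) (γ : ℝ) (C : Finset (Fin n)) : ℝ :=
  (cutW w C + γ * (Mhat qm C + Nhat qc C)) / bal b C

lemma sum01_ge_one {α : Type*} {s : Finset α} {f : α → ℝ}
    (h01 : ∀ a ∈ s, f a = 0 ∨ f a = 1) (hne : ∑ a ∈ s, f a ≠ 0) :
    (1 : ℝ) ≤ ∑ a ∈ s, f a := by
  obtain ⟨a, ha, hfa⟩ : ∃ a ∈ s, f a ≠ 0 := by
    by_contra hall
    push_neg at hall
    exact hne (Finset.sum_eq_zero hall)
  have h1 : f a = 1 := (h01 a ha).resolve_left hfa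
  calc (1:ℝ) = f a := h1.symm
    _ ≤ ∑ a ∈ s, f a := Finset.single_le_sum
        (fun b hb => by rcases h01 b hb with h | h <;> simp [h]) ha

lemma sq_sum_ge_two {n : ℕ} {qc : Fin n → Fin n → ℝ}
    (hqc01 : ∀ i j, qc i j = 0 ∨ qc i j = 1) (hsymm : ∀ i j, qc i j = qc j i)
    (hdiag : ∀ i, qc i i = 0) (E : Finset (Fin n))
    (hne : ∑ i ∈ E, ∑ j ∈ E, qc i j ≠ 0) :
    (2:ℝ) ≤ ∑ i ∈ E, ∑ j ∈ E, qc i j := by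
  rw [← Finset.sum_product'] at hne ⊢
  obtain ⟨p, hp, hfp⟩ : ∃ p ∈ E ×ˢ E, qc p.1 p.2 ≠ 0 := by
    by_contra hall; push_neg at hall; exact hne (Finset.sum_eq_zero hall)
  obtain ⟨i, j⟩ := p
  simp only [Finset.mem_product] at hp
  have hij : i ≠ j := fun h => hfp (by simp only at hfp ⊢; rw [h]; exact hdiag j)
  have h1 : qc i j = 1 := (hqc01 i j).resolve_left hfp
  have hsub : ({(i,j), (j,i)} : Finset (Fin n × Fin n)) ⊆ E ×ˢ E := by
    intro p hp'
    simp only [Finset.mem_insert, Finset.mem_singleton] at hp'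
    rcases hp' with h | h <;> subst h <;> simp [Finset.mem_product, hp.1, hp.2]
  have hle := Finset.sum_le_sum_of_subset_of_nonneg (f := fun p : Fin n × Fin n => qc p.1 p.2)
      hsub (fun p _ _ => by rcases hqc01 p.1 p.2 with h | h <;> simp [h])
  rw [Finset.sum_pair (by simp [hij, Prod.ext_iff] : ((i,j) : Fin n × Fin n) ≠ (j,i))] at hle
  simp only at hle
  rw [hsymm j i] at hle
  linarith

/-- Theorem 2: for γ ≥ gvol(V)·λ/4, the minimizers of NCut over consistent nontrivial
partitions coincide with the minimizers of F̂_γ over nontrivial subsets, and the optimal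
values agree. -/
theorem stmt_1 {n : ℕ} (w : Fin n → Fin n → ℝ) (b : Fin n → ℝ)
    (qm qc : Fin n → Fin n → ℝ)
    (hw_symm : ∀ i j, w i j = w j i) (hw_nonneg : ∀ i j, 0 ≤ w i j)
    (hb : ∀ i, 0 < b i)
    (hqm01 : ∀ i j, qm i j = 0 ∨ qm i j = 1) (hqm_symm : ∀ i j, qm i j = qm j i)
    (hqc01 : ∀ i j, qc i j = 0 ∨ qc i j = 1) (hqc_symm : ∀ i j, qc i j = qc j i)
    (hconn : ∀ C : Finset (Fin n), C ≠ ∅ → C ≠ Finset.univ → 0 < cutW w C)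
    (C : Finset (Fin n)) (hC₁ : C ≠ ∅) (hC₂ : C ≠ Finset.univ)
    (hcons : Mhat qm C = 0 ∧ Nhat qc C = 0)
    (γ : ℝ)
    (hγ : gvol b Finset.univ * ncut w b C / 4 ≤ γ) :
    ({D : Finset (Fin n) | D ≠ ∅ ∧ D ≠ Finset.univ ∧ Mhat qm D = 0 ∧ Nhat qc D = 0 ∧
        ∀ D' : Finset (Fin n), D' ≠ ∅ → D' ≠ Finset.univ →
          Mhat qm D' = 0 → Nhat qc D' = 0 → ncut w b D ≤ ncut w b D'}
      = {D : Finset (Fin n) | D ≠ ∅ ∧ D ≠ Finset.univ ∧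
        ∀ D' : Finset (Fin n), D' ≠ ∅ → D' ≠ Finset.univ →
          Fhat w b qm qc γ D ≤ Fhat w b qm qc γ D'})
    ∧ sInf {x : ℝ | ∃ D : Finset (Fin n), D ≠ ∅ ∧ D ≠ Finset.univ ∧
          Mhat qm D = 0 ∧ Nhat qc D = 0 ∧ x = ncut w b D}
      = sInf {x : ℝ | ∃ D : Finset (Fin n), D ≠ ∅ ∧ D ≠ Finset.univ ∧
          x = Fhat w b qm qc γ D} := by
  classical
  obtain ⟨hM0, hN0⟩ := hcons
  have hCne : C.Nonempty := Finset.nonempty_iff_ne_empty.mpr hC₁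
  have hUniv : (Finset.univ : Finset (Fin n)).Nonempty := ⟨hCne.choose, Finset.mem_univ _⟩
  have hgvol : ∀ D : Finset (Fin n), D.Nonempty → 0 < gvol b D :=
    fun D hD => Finset.sum_pos (fun i _ => hb i) hD
  have hs : 0 < gvol b (Finset.univ : Finset (Fin n)) := hgvol _ hUniv
  have hcompl : ∀ D : Finset (Fin n), D ≠ Finset.univ → Dᶜ.Nonempty := fun D h => by
    rw [Finset.nonempty_iff_ne_empty]; simpa using h
  have hbal : ∀ D : Finset (Fin n), D ≠ ∅ → D ≠ Finset.univ → 0 < bal b D := fun D h1 h2 => by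
    have h3 := hgvol D (Finset.nonempty_iff_ne_empty.mpr h1)
    have h4 := hgvol Dᶜ (hcompl D h2)
    unfold bal
    positivity
  have hqm_nonneg : ∀ i j, 0 ≤ qm i j := fun i j => by rcases hqm01 i j with h|h <;> simp [h]
  have hqc_nonneg : ∀ i j, 0 ≤ qc i j := fun i j => by rcases hqc01 i j with h|h <;> simp [h]
  have hM_nonneg : ∀ D : Finset (Fin n), 0 ≤ Mhat qm D := fun D => by
    have : 0 ≤ ∑ i ∈ D, ∑ j ∈ Dᶜ, qm i j :=
      Finset.sum_nonneg fun i _ => Finset.sum_nonneg fun j _ => hqm_nonneg i j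
    unfold Mhat; linarith
  have hsqA : ∀ E : Finset (Fin n), 0 ≤ ∑ i ∈ E, ∑ j ∈ E, qc i j := fun E =>
    Finset.sum_nonneg fun i _ => Finset.sum_nonneg fun j _ => hqc_nonneg i j
  have hN_nonneg : ∀ D : Finset (Fin n), 0 ≤ Nhat qc D := fun D => by
    have := hsqA D; have := hsqA Dᶜ; unfold Nhat; linarith
  have key0 : ∀ E : Finset (Fin n), (∑ i ∈ E, ∑ j ∈ E, qc i j) = 0 →
      ∀ i ∈ E, ∀ j ∈ E, qc i j = 0 := by
    intro E hE i hi j hj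
    have h1 := (Finset.sum_eq_zero_iff_of_nonneg
      (fun i _ => Finset.sum_nonneg fun j _ => hqc_nonneg i j)).mp hE i hi
    exact (Finset.sum_eq_zero_iff_of_nonneg (fun j _ => hqc_nonneg i j)).mp h1 j hj
  have hqc_diag : ∀ i, qc i i = 0 := by
    intro i
    have hA := hsqA C; have hB := hsqA Cᶜ
    have hN0' : (∑ i ∈ C, ∑ j ∈ C, qc i j) + ∑ i ∈ Cᶜ, ∑ j ∈ Cᶜ, qc i j = 0 := hN0
    by_cases hi : i ∈ C
    · exact key0 C (by linarith) i hi i hi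
    · have hi' : i ∈ Cᶜ := Finset.mem_compl.mpr hi
      exact key0 Cᶜ (by linarith) i hi' i hi'
  have hMN2 : ∀ D : Finset (Fin n), ¬(Mhat qm D = 0 ∧ Nhat qc D = 0) →
      2 ≤ Mhat qm D + Nhat qc D := by
    intro D hD
    by_cases hM : Mhat qm D = 0
    · have hN : Nhat qc D ≠ 0 := fun h => hD ⟨hM, h⟩
      have hNAB : Nhat qc D = (∑ i ∈ D, ∑ j ∈ D, qc i j) + ∑ i ∈ Dᶜ, ∑ j ∈ Dᶜ, qc i j := rfl
      by_cases hA : (∑ i ∈ D, ∑ j ∈ D, qc i j) = 0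
      · have hB : (∑ i ∈ Dᶜ, ∑ j ∈ Dᶜ, qc i j) ≠ 0 := fun h => hN (by rw [hNAB, hA, h]; ring)
        have := sq_sum_ge_two hqc01 hqc_symm hqc_diag Dᶜ hB
        have := hsqA D
        rw [hM, hNAB]; linarith
      · have := sq_sum_ge_two hqc01 hqc_symm hqc_diag D hA
        have := hsqA Dᶜ
        rw [hM, hNAB]; linarith
    · have hrw : Mhat qm D = 2 * ∑ p ∈ D ×ˢ Dᶜ, qm p.1 p.2 := by
        rw [Mhat, Finset.sum_product']
      have hS : (∑ p ∈ D ×ˢ Dᶜ, qm p.1 p.2) ≠ 0 := fun h => hM (by rw [hrw, h, mul_zero])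
      have h1 := sum01_ge_one (fun p _ => hqm01 p.1 p.2) hS
      have h2 := hN_nonneg D
      rw [hrw]; linarith
  have hlampos : 0 < ncut w b C := div_pos (hconn C hC₁ hC₂) (hbal C hC₁ hC₂)
  have hγ0 : 0 ≤ γ := le_trans (by positivity) hγ
  have hbal_le : ∀ D : Finset (Fin n), bal b D ≤ gvol b Finset.univ / 2 := fun D => by
    have hsum : gvol b D + gvol b Dᶜ = gvol b Finset.univ := Finset.sum_add_sum_compl D b
    unfold bal
    rw [div_le_div_iff₀ hs two_pos]
    nlinarith [sq_nonneg (gvol b D - gvol b Dᶜ)]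
  have hkey : ∀ D : Finset (Fin n), D ≠ ∅ → D ≠ Finset.univ →
      ¬(Mhat qm D = 0 ∧ Nhat qc D = 0) → ncut w b C < Fhat w b qm qc γ D := by
    intro D h1 h2 h3
    have hbD := hbal D h1 h2
    have hcD := hconn D h1 h2
    have hMN := hMN2 D h3
    rw [Fhat, lt_div_iff₀ hbD]
    have e1 : ncut w b C * bal b D ≤ ncut w b C * (gvol b Finset.univ / 2) :=
      mul_le_mul_of_nonneg_left (hbal_le D) hlampos.le
    have e2 : γ * 2 ≤ γ * (Mhat qm D + Nhat qc D) := mul_le_mul_of_nonneg_left hMN hγ0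
    nlinarith [hγ, hcD]
  have hFeq : ∀ D : Finset (Fin n), Mhat qm D = 0 → Nhat qc D = 0 →
      Fhat w b qm qc γ D = ncut w b D := by
    intro D hm hn; rw [Fhat, ncut, hm, hn]; ring_nf
  constructor
  · ext D
    simp only [Set.mem_setOf_eq]
    constructor
    · rintro ⟨h1, h2, hm, hn, hmin⟩
      refine ⟨h1, h2, fun D' h1' h2' => ?_⟩
      rw [hFeq D hm hn]
      by_cases hc : Mhat qm D' = 0 ∧ Nhat qc D' = 0
      · rw [hFeq D' hc.1 hc.2]; exact hmin D' h1' h2' hc.1 hc.2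
      · have ha := hkey D' h1' h2' hc
        have hb' := hmin C hC₁ hC₂ hM0 hN0
        linarith
    · rintro ⟨h1, h2, hmin⟩
      have hle : Fhat w b qm qc γ D ≤ ncut w b C := by
        have := hmin C hC₁ hC₂
        rwa [hFeq C hM0 hN0] at this
      have hcons' : Mhat qm D = 0 ∧ Nhat qc D = 0 := by
        by_contra hc
        exact absurd hle (not_le.mpr (hkey D h1 h2 hc))
      refine ⟨h1, h2, hcons'.1, hcons'.2, fun D' h1' h2' hm' hn' => ?_⟩
      have := hmin D' h1' h2'
      rwa [hFeq D hcons'.1 hcons'.2, hFeq D' hm' hn'] at this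
  · obtain ⟨D0, hD0, hmin0⟩ := Finset.exists_min_image
      (Finset.univ.filter (fun D : Finset (Fin n) =>
        D ≠ ∅ ∧ D ≠ Finset.univ ∧ Mhat qm D = 0 ∧ Nhat qc D = 0))
      (ncut w b) ⟨C, by simp [hC₁, hC₂, hM0, hN0]⟩
    simp only [Finset.mem_filter, Finset.mem_univ, true_and] at hD0 hmin0
    obtain ⟨hD01, hD02, hD0m, hD0n⟩ := hD0
    have hD0min : ∀ D' : Finset (Fin n), D' ≠ ∅ → D' ≠ Finset.univ →
        Mhat qm D' = 0 → Nhat qc D' = 0 → ncut w b D0 ≤ ncut w b D' :=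
      fun D' a b' c d => hmin0 D' (by simp [a, b', c, d])
    have hCge : ncut w b D0 ≤ ncut w b C := hD0min C hC₁ hC₂ hM0 hN0
    have hmem1 : ncut w b D0 ∈ {x : ℝ | ∃ D : Finset (Fin n), D ≠ ∅ ∧ D ≠ Finset.univ ∧
        Mhat qm D = 0 ∧ Nhat qc D = 0 ∧ x = ncut w b D} :=
      ⟨D0, hD01, hD02, hD0m, hD0n, rfl⟩
    have hbd1 : ∀ x ∈ {x : ℝ | ∃ D : Finset (Fin n), D ≠ ∅ ∧ D ≠ Finset.univ ∧
        Mhat qm D = 0 ∧ Nhat qc D = 0 ∧ x = ncut w b D}, ncut w b D0 ≤ x := by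
      rintro x ⟨D', a, b', c, d, rfl⟩
      exact hD0min D' a b' c d
    have hmem2 : ncut w b D0 ∈ {x : ℝ | ∃ D : Finset (Fin n), D ≠ ∅ ∧ D ≠ Finset.univ ∧
        x = Fhat w b qm qc γ D} := ⟨D0, hD01, hD02, (hFeq D0 hD0m hD0n).symm⟩
    have hbd2 : ∀ x ∈ {x : ℝ | ∃ D : Finset (Fin n), D ≠ ∅ ∧ D ≠ Finset.univ ∧
        x = Fhat w b qm qc γ D}, ncut w b D0 ≤ x := by
      rintro x ⟨D', a, b', rfl⟩
      by_cases hc : Mhat qm D' = 0 ∧ Nhat qc D' = 0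
      · rw [hFeq D' hc.1 hc.2]; exact hD0min D' a b' hc.1 hc.2
      · have := hkey D' a b' hc
        linarith
    rw [le_antisymm (csInf_le ⟨_, hbd1⟩ hmem1) (le_csInf ⟨_, hmem1⟩ hbd1),
        le_antisymm (csInf_le ⟨_, hbd2⟩ hmem2) (le_csInf ⟨_, hmem2⟩ hbd2)]
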